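/- Wielandt's theorem: Let A be an n×n real matrix with all entries strictly positive and let r be its Perron–Frobenius eigenvalue (the eigenvalue of maximal modulus, which is real and positive). If B is an n×n complex matrix with |B_{ij}| ≤ A_{ij} for all i, j, then every eigenvalue λ of B satisfies |λ| ≤ r. -/

import Mathlib

open Matrix
open scoped Matrix.Norms.L2Operator

section wielandtAux
variable {n : ℕ}

private lemma wielandt_eucl_norm_mono {u v : EuclideanSpace ℂ (Fin n)}
    (h : ∀ i, ‖u i‖ ≤ ‖v i‖) : ‖u‖ ≤ ‖v‖ := by
  rw [EuclideanSpace.norm_eq, EuclideanSpace.norm_eq]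
  refine Real.sqrt_le_sqrt (Finset.sum_le_sum fun i _ => ?_)
  exact pow_le_pow_left₀ (norm_nonneg _) (h i) 2

private lemma wielandt_opnorm_mono (A : Matrix (Fin n) (Fin n) ℝ) (hA : ∀ i j, 0 ≤ A i j)
    (M : Matrix (Fin n) (Fin n) ℂ) (h : ∀ i j, ‖M i j‖ ≤ A i j) :
    ‖M‖ ≤ ‖A.map Complex.ofReal‖ := by
  rw [Matrix.l2_opNorm_def]
  refine ContinuousLinearMap.opNorm_le_bound _ (norm_nonneg _) fun x => ?_
  rw [LinearEquiv.trans_apply, LinearMap.coe_toContinuousLinearMap', Matrix.toEuclideanLin_apply]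
  set x' : Fin n → ℂ := (WithLp.equiv 2 (Fin n → ℂ)) x with hx'
  have hyx : ‖(EuclideanSpace.equiv (Fin n) ℂ).symm (fun j => (‖x' j‖ : ℂ))‖ = ‖x‖ := by
    rw [EuclideanSpace.norm_eq, EuclideanSpace.norm_eq]
    congr 1
    exact Finset.sum_congr rfl fun j _ => by simp [hx']
  have key : ∀ i, ‖((WithLp.equiv 2 (Fin n → ℂ)).symm (M *ᵥ x') : EuclideanSpace ℂ (Fin n)) i‖
      ≤ ‖((EuclideanSpace.equiv (Fin n) ℂ).symm ((A.map Complex.ofReal) *ᵥ (fun j => (‖x' j‖ : ℂ)))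
          : EuclideanSpace ℂ (Fin n)) i‖ := by
    intro i
    show ‖(M *ᵥ x') i‖ ≤ ‖((A.map Complex.ofReal) *ᵥ (fun j => (‖x' j‖ : ℂ))) i‖
    have h1 : ((A.map Complex.ofReal) *ᵥ (fun j => (‖x' j‖ : ℂ))) i
        = ((∑ j, A i j * ‖x' j‖ : ℝ) : ℂ) := by
      simp [mulVec, dotProduct, Complex.ofReal_mul]
    have h2 : ‖(M *ᵥ x') i‖ ≤ ∑ j, A i j * ‖x' j‖ := by
      simp only [mulVec, dotProduct]
      refine (norm_sum_le _ _).trans (Finset.sum_le_sum fun j _ => ?_)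
      rw [norm_mul]
      exact mul_le_mul_of_nonneg_right (h i j) (norm_nonneg _)
    rw [h1, Complex.norm_real, Real.norm_of_nonneg
      (Finset.sum_nonneg fun j _ => mul_nonneg (hA i j) (norm_nonneg _))]
    exact h2
  calc ‖((WithLp.equiv 2 (Fin n → ℂ)).symm (M *ᵥ x') : EuclideanSpace ℂ (Fin n))‖
      ≤ ‖(EuclideanSpace.equiv (Fin n) ℂ).symm
          ((A.map Complex.ofReal) *ᵥ (fun j => (‖x' j‖ : ℂ)))‖ := wielandt_eucl_norm_mono key
    _ ≤ ‖A.map Complex.ofReal‖ *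
          ‖(EuclideanSpace.equiv (Fin n) ℂ).symm (fun j => (‖x' j‖ : ℂ))‖ :=
        Matrix.l2_opNorm_mulVec (A.map Complex.ofReal) ((EuclideanSpace.equiv (Fin n) ℂ).symm (fun j => (‖x' j‖ : ℂ)))
    _ = ‖A.map Complex.ofReal‖ * ‖x‖ := by rw [hyx]

private lemma wielandt_spec_iff (M : Matrix (Fin n) (Fin n) ℂ) (z : ℂ) :
    z ∈ spectrum ℂ M ↔ ∃ v : Fin n → ℂ, v ≠ 0 ∧ M.mulVec v = z • v := by
  rw [← AlgEquiv.spectrum_eq (Matrix.toLinAlgEquiv' (n := Fin n) (R := ℂ)) M,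
      ← Module.End.hasEigenvalue_iff_mem_spectrum, Module.End.hasEigenvalue_iff,
      Submodule.ne_bot_iff]
  constructor
  · rintro ⟨v, hv, hv0⟩
    exact ⟨v, hv0, by simpa [Module.End.mem_eigenspace_iff] using hv⟩
  · rintro ⟨v, hv0, hv⟩
    exact ⟨v, by simpa [Module.End.mem_eigenspace_iff] using hv, hv0⟩

private lemma wielandt_pow_nonneg (A : Matrix (Fin n) (Fin n) ℝ) (hA : ∀ i j, 0 ≤ A i j) :
    ∀ k i j, 0 ≤ (A ^ k) i j := by
  intro k
  induction k with
  | zero => intro i j; by_cases h : i = j <;> simp [pow_zero, Matrix.one_apply, h]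
  | succ k ih =>
    intro i j
    rw [pow_succ, Matrix.mul_apply]
    exact Finset.sum_nonneg fun l _ => mul_nonneg (ih i l) (hA l j)

private lemma wielandt_pow_dom (A : Matrix (Fin n) (Fin n) ℝ) (hA : ∀ i j, 0 ≤ A i j)
    (B : Matrix (Fin n) (Fin n) ℂ) (hB : ∀ i j, ‖B i j‖ ≤ A i j) :
    ∀ k i j, ‖(B ^ k) i j‖ ≤ (A ^ k) i j := by
  intro k
  induction k with
  | zero =>
    intro i j
    by_cases h : i = j <;> simp [pow_zero, Matrix.one_apply, h]
  | succ k ih =>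
    intro i j
    rw [pow_succ, pow_succ, Matrix.mul_apply, Matrix.mul_apply]
    refine (norm_sum_le _ _).trans (Finset.sum_le_sum fun l _ => ?_)
    rw [norm_mul]
    exact mul_le_mul (ih i l) (hB l j) (norm_nonneg _) (wielandt_pow_nonneg A hA k i l)

end wielandtAux

/-- Wielandt's theorem: if `A` is entrywise positive with Perron–Frobenius eigenvalue `r`
(a positive real eigenvalue dominating all eigenvalues in modulus), and `B` is a complex
matrix with `|B i j| ≤ A i j`, then every eigenvalue `μ` of `B` satisfies `‖μ‖ ≤ r`. -/
theorem stmt5 {n : ℕ} (A : Matrix (Fin n) (Fin n) ℝ) (hA : ∀ i j, 0 < A i j)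
    (r : ℝ) (hr : 0 < r)
    (hreig : ∃ v : Fin n → ℝ, v ≠ 0 ∧ A.mulVec v = r • v)
    (hrmax : ∀ μ : ℂ, (∃ v : Fin n → ℂ, v ≠ 0 ∧
        (A.map Complex.ofReal).mulVec v = μ • v) → ‖μ‖ ≤ r)
    (B : Matrix (Fin n) (Fin n) ℂ) (hB : ∀ i j, ‖B i j‖ ≤ A i j)
    (μ : ℂ) (hμ : ∃ v : Fin n → ℂ, v ≠ 0 ∧ B.mulVec v = μ • v) :
    ‖μ‖ ≤ r := by
  classical
  set A' : Matrix (Fin n) (Fin n) ℂ := A.map Complex.ofReal with hA'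
  have hA0 : ∀ i j, 0 ≤ A i j := fun i j => (hA i j).le
  -- μ is in the spectrum of B
  have hBspec : μ ∈ spectrum ℂ B := (wielandt_spec_iff B μ).2 hμ
  -- norm comparison for powers
  have hnorm : ∀ k : ℕ, ‖B ^ k‖₊ ≤ ‖A' ^ k‖₊ := by
    intro k
    have hmap : A' ^ k = (A ^ k).map Complex.ofReal := by
      have e : A.map Complex.ofReal = Complex.ofRealHom.mapMatrix A := rfl
      rw [hA', e, ← map_pow]
      rfl
    rw [← NNReal.coe_le_coe]
    calc (‖B ^ k‖₊ : ℝ) = ‖B ^ k‖ := rfl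
      _ ≤ ‖(A ^ k).map Complex.ofReal‖ :=
          wielandt_opnorm_mono (A ^ k) (wielandt_pow_nonneg A hA0 k) (B ^ k)
            (wielandt_pow_dom A hA0 B hB k)
      _ = ‖A' ^ k‖ := by rw [hmap]
  -- spectral radius comparison via Gelfand's formula
  have hsr : spectralRadius ℂ B ≤ spectralRadius ℂ A' := by
    refine le_of_tendsto_of_tendsto'
      (spectrum.pow_nnnorm_pow_one_div_tendsto_nhds_spectralRadius B)
      (spectrum.pow_nnnorm_pow_one_div_tendsto_nhds_spectralRadius A') fun k => ?_
    exact ENNReal.rpow_le_rpow (by exact_mod_cast hnorm k) (by positivity)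
  -- spectral radius of A' is at most r
  have hsrA : spectralRadius ℂ A' ≤ ENNReal.ofReal r := by
    rw [spectralRadius]
    refine iSup₂_le fun z hz => ?_
    have := hrmax z ((wielandt_spec_iff A' z).1 hz)
    calc (‖z‖₊ : ENNReal) = ENNReal.ofReal ‖z‖ := (ofReal_norm z).symm
      _ ≤ ENNReal.ofReal r := ENNReal.ofReal_le_ofReal this
  -- μ's norm is at most the spectral radius of B
  have hmem : (‖μ‖₊ : ENNReal) ≤ spectralRadius ℂ B := by
    rw [spectralRadius]
    exact le_iSup₂ (f := fun (k : ℂ) (_ : k ∈ spectrum ℂ B) => (‖k‖₊ : ENNReal)) μ hBspec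
  have final : ENNReal.ofReal ‖μ‖ ≤ ENNReal.ofReal r := by
    rw [ofReal_norm]
    exact hmem.trans (hsr.trans hsrA)
  exact (ENNReal.ofReal_le_ofReal_iff hr.le).1 final
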